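/- Let W be a positive refinement commutative monoid and A a type of labels, and let B be the endofunctor on types sending X to A → Finset (X →₀ W). Let (X1, h1), (X2, h2) and (Y, g) be B-coalgebras, let f1 : (X1, h1) → (Y, g) and f2 : (X2, h2) → (Y, g) be B-coalgebra morphisms, and let R = { (x1, x2) ∈ X1 × X2 | f1 x1 = f2 x2 } be their pullback. Then R is an Aczel–Mendler coalgebraic bisimulation: there exists a coalgebra structure γ : R → B R such that both projections π1 : R → X1 and π2 : R → X2 are B-coalgebra morphisms from (R, γ) to (X1, h1) and (X2, h2) respectively. -/

import Mathlib

open scoped Classical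

/-- A commutative monoid is positive (zerosumfree) if `x + y = 0` implies
`x = 0` and `y = 0`. -/
def IsPositiveMonoid (W : Type*) [AddCommMonoid W] : Prop :=
  ∀ x y : W, x + y = 0 → x = 0 ∧ y = 0

/-- A commutative monoid is a refinement monoid if every equation
`r1 + r2 = c1 + c2` admits a 2×2 refinement matrix. -/
def IsRefinementMonoid (W : Type*) [AddCommMonoid W] : Prop :=
  ∀ r1 r2 c1 c2 : W, r1 + r2 = c1 + c2 →
    ∃ m11 m12 m21 m22 : W,
      r1 = m11 + m12 ∧ r2 = m21 + m22 ∧ c1 = m11 + m21 ∧ c2 = m12 + m22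

/-- The action of the behaviour functor `B = (P_f ∘ F_W)^A` on a function `f`. -/
noncomputable def BMap {W A : Type*} [AddCommMonoid W] {X Y : Type*} (f : X → Y)
    (h : A → Finset (X →₀ W)) : A → Finset (Y →₀ W) :=
  fun a => (h a).image (Finsupp.mapDomain f)

section Aux

variable {W : Type*} [AddCommMonoid W]

lemma pos_term_eq_zero (hpos : IsPositiveMonoid W) {ι : Type*} (s : Finset ι) (g : ι → W)
    (h : ∑ i ∈ s, g i = 0) : ∀ i ∈ s, g i = 0 := by
  intro i hi
  rw [← Finset.add_sum_erase _ _ hi] at h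
  exact (hpos _ _ h).1

lemma sum_zero_imp_zero (hpos : IsPositiveMonoid W) {X : Type*} (σ : X →₀ W)
    (h : σ.sum (fun _ v => v) = 0) : σ = 0 := by
  ext x
  by_cases hx : x ∈ σ.support
  · exact pos_term_eq_zero hpos _ _ h x hx
  · simpa using Finsupp.notMem_support_iff.mp hx

lemma mapDomain_apply_eq {X Y : Type*} (f : X → Y) (x : X →₀ W) (y : Y) :
    Finsupp.mapDomain f x y = ∑ i ∈ x.support, if f i = y then x i else 0 := by
  rw [Finsupp.mapDomain, Finsupp.sum_apply, Finsupp.sum]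
  simp_rw [Finsupp.single_apply]

lemma mapDomain_const {X Y : Type*} (a : Y) (ρ : X →₀ W) :
    Finsupp.mapDomain (fun _ => a) ρ = Finsupp.single a (ρ.sum fun _ v => v) := by
  ext y
  rw [mapDomain_apply_eq, Finsupp.single_apply]
  by_cases h : a = y
  · simp [h, Finsupp.sum]
  · simp [h]

/-- Column splitting: split a finitely supported family according to a
2-part decomposition of its total sum. -/
lemma split_col {X2 : Type*} (hpos : IsPositiveMonoid W) (href : IsRefinementMonoid W)
    (σ : X2 →₀ W) : ∀ v v' : W, v + v' = σ.sum (fun _ x => x) →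
    ∃ ρ ρ' : X2 →₀ W, σ = ρ + ρ' ∧ ρ.sum (fun _ x => x) = v ∧ ρ'.sum (fun _ x => x) = v' := by
  induction σ using Finsupp.induction with
  | zero =>
    intro v v' hv
    rw [Finsupp.sum_zero_index] at hv
    obtain ⟨h1, h2⟩ := hpos _ _ hv
    exact ⟨0, 0, by simp, by simp [h1], by simp [h2]⟩
  | single_add a b f ha hb ih =>
    intro v v' hv
    rw [Finsupp.sum_add_index' (fun _ => rfl) (fun _ _ _ => rfl),
      Finsupp.sum_single_index rfl] at hv
    obtain ⟨m11, m12, m21, m22, hv1, hv2, hb', hf'⟩ := href v v' b (f.sum fun _ x => x) hv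
    obtain ⟨ρf, ρf', hfe, hs1, hs2⟩ := ih m12 m22 hf'.symm
    refine ⟨Finsupp.single a m11 + ρf, Finsupp.single a m21 + ρf', ?_, ?_, ?_⟩
    · rw [hb', Finsupp.single_add, hfe]
      abel
    · rw [Finsupp.sum_add_index' (fun _ => rfl) (fun _ _ _ => rfl),
        Finsupp.sum_single_index rfl, hs1, hv1]
    · rw [Finsupp.sum_add_index' (fun _ => rfl) (fun _ _ _ => rfl),
        Finsupp.sum_single_index rfl, hs2, hv2]

/-- Matrix refinement: two finitely supported families with equal total sums
are the two marginals of a common finitely supported matrix. -/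
lemma matrix_refine {X1 X2 : Type*} (hpos : IsPositiveMonoid W) (href : IsRefinementMonoid W)
    (σ1 : X1 →₀ W) : ∀ σ2 : X2 →₀ W, σ1.sum (fun _ v => v) = σ2.sum (fun _ v => v) →
    ∃ m : (X1 × X2) →₀ W,
      Finsupp.mapDomain Prod.fst m = σ1 ∧ Finsupp.mapDomain Prod.snd m = σ2 := by
  induction σ1 using Finsupp.induction with
  | zero =>
    intro σ2 hs
    rw [Finsupp.sum_zero_index] at hs
    refine ⟨0, by simp [Finsupp.mapDomain_zero], ?_⟩
    rw [Finsupp.mapDomain_zero, sum_zero_imp_zero hpos σ2 hs.symm]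
  | single_add a b f ha hb ih =>
    intro σ2 hs
    rw [Finsupp.sum_add_index' (fun _ => rfl) (fun _ _ _ => rfl),
      Finsupp.sum_single_index rfl] at hs
    obtain ⟨ρ, ρ', hσ2, hρ, hρ'⟩ := split_col hpos href σ2 b (f.sum fun _ x => x) hs
    obtain ⟨m', hm1, hm2⟩ := ih ρ' hρ'.symm
    refine ⟨Finsupp.mapDomain (Prod.mk a) ρ + m', ?_, ?_⟩
    · rw [Finsupp.mapDomain_add, hm1, ← Finsupp.mapDomain_comp]
      have : (Prod.fst ∘ Prod.mk a : X2 → X1) = fun _ => a := rfl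
      rw [this, mapDomain_const, hρ]
    · rw [Finsupp.mapDomain_add, hm2, ← Finsupp.mapDomain_comp]
      have : (Prod.snd ∘ Prod.mk a : X2 → X2) = id := rfl
      rw [this, Finsupp.mapDomain_id, hσ2]

/-- Pullback lifting: over a positive refinement monoid, two finitely
supported families with the same pushforward along a cospan lift to a common
family on the pullback. -/
lemma pullback_lift {X1 X2 Y : Type*} (hpos : IsPositiveMonoid W)
    (href : IsRefinementMonoid W) (f1 : X1 → Y) (f2 : X2 → Y)
    (ρ1 : X1 →₀ W) (ρ2 : X2 →₀ W)
    (h : Finsupp.mapDomain f1 ρ1 = Finsupp.mapDomain f2 ρ2) :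
    ∃ τ : {p : X1 × X2 // f1 p.1 = f2 p.2} →₀ W,
      Finsupp.mapDomain (fun q => q.1.1) τ = ρ1 ∧
      Finsupp.mapDomain (fun q => q.1.2) τ = ρ2 := by
  classical
  set S : Finset Y := ρ1.support.image f1 ∪ ρ2.support.image f2 with hS
  set σ1 : Y → (X1 →₀ W) := fun y => ρ1.filter (fun x => f1 x = y) with hσ1
  set σ2 : Y → (X2 →₀ W) := fun y => ρ2.filter (fun x => f2 x = y) with hσ2
  have hsum1 : ∀ y, (σ1 y).sum (fun _ v => v) = Finsupp.mapDomain f1 ρ1 y := by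
    intro y
    rw [Finsupp.sum_filter_index, Finsupp.support_filter, mapDomain_apply_eq,
      Finset.sum_filter]
  have hsum2 : ∀ y, (σ2 y).sum (fun _ v => v) = Finsupp.mapDomain f2 ρ2 y := by
    intro y
    rw [Finsupp.sum_filter_index, Finsupp.support_filter, mapDomain_apply_eq,
      Finset.sum_filter]
  have hmex : ∀ y : Y, ∃ m : (X1 × X2) →₀ W,
      Finsupp.mapDomain Prod.fst m = σ1 y ∧ Finsupp.mapDomain Prod.snd m = σ2 y := by
    intro y
    exact matrix_refine hpos href (σ1 y) (σ2 y) (by rw [hsum1, hsum2, h])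
  choose m hm1 hm2 using hmex
  have hsupp : ∀ y : Y, ∀ p ∈ (m y).support, f1 p.1 = y ∧ f2 p.2 = y := by
    intro y p hp
    have hne : m y p ≠ 0 := Finsupp.mem_support_iff.mp hp
    constructor
    · by_contra hcon
      have h0 : σ1 y p.1 = 0 := by
        rw [hσ1, Finsupp.filter_apply]
        simp [hcon]
      rw [← hm1 y, mapDomain_apply_eq] at h0
      have := pos_term_eq_zero hpos _ _ h0 p hp
      simp at this
      exact hne this
    · by_contra hcon
      have h0 : σ2 y p.2 = 0 := by
        rw [hσ2, Finsupp.filter_apply]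
        simp [hcon]
      rw [← hm2 y, mapDomain_apply_eq] at h0
      have := pos_term_eq_zero hpos _ _ h0 p hp
      simp at this
      exact hne this
  have hrange : ∀ y : Y, ((m y).support : Set (X1 × X2)) ⊆
      Set.range (Subtype.val : {p : X1 × X2 // f1 p.1 = f2 p.2} → X1 × X2) := by
    intro y p hp
    obtain ⟨ha1, ha2⟩ := hsupp y p hp
    exact ⟨⟨p, ha1.trans ha2.symm⟩, rfl⟩
  set τy : Y → ({p : X1 × X2 // f1 p.1 = f2 p.2} →₀ W) := fun y =>
    Finsupp.comapDomain Subtype.val (m y) Subtype.val_injective.injOn with hτy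
  have hτval : ∀ y, Finsupp.mapDomain Subtype.val (τy y) = m y := fun y =>
    Finsupp.mapDomain_comapDomain _ Subtype.val_injective (m y) (hrange y)
  refine ⟨∑ y ∈ S, τy y, ?_, ?_⟩
  · rw [Finsupp.mapDomain_finset_sum]
    have hcomp : ∀ y, Finsupp.mapDomain
        (fun q : {p : X1 × X2 // f1 p.1 = f2 p.2} => q.1.1) (τy y) = σ1 y := by
      intro y
      have : (fun q : {p : X1 × X2 // f1 p.1 = f2 p.2} => q.1.1) =
          Prod.fst ∘ Subtype.val := rfl
      rw [this, Finsupp.mapDomain_comp, hτval, hm1]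
    simp_rw [hcomp]
    ext x
    rw [Finset.sum_apply']
    simp_rw [hσ1, Finsupp.filter_apply]
    rw [Finset.sum_ite_eq S (f1 x) (fun _ => ρ1 x)]
    by_cases hx : f1 x ∈ S
    · simp [hx]
    · have : ρ1 x = 0 := by
        by_contra hc
        exact hx (Finset.mem_union_left _
          (Finset.mem_image_of_mem f1 (Finsupp.mem_support_iff.mpr hc)))
      simp [hx, this]
  · rw [Finsupp.mapDomain_finset_sum]
    have hcomp : ∀ y, Finsupp.mapDomain
        (fun q : {p : X1 × X2 // f1 p.1 = f2 p.2} => q.1.2) (τy y) = σ2 y := by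
      intro y
      have : (fun q : {p : X1 × X2 // f1 p.1 = f2 p.2} => q.1.2) =
          Prod.snd ∘ Subtype.val := rfl
      rw [this, Finsupp.mapDomain_comp, hτval, hm2]
    simp_rw [hcomp]
    ext x
    rw [Finset.sum_apply']
    simp_rw [hσ2, Finsupp.filter_apply]
    rw [Finset.sum_ite_eq S (f2 x) (fun _ => ρ2 x)]
    by_cases hx : f2 x ∈ S
    · simp [hx]
    · have : ρ2 x = 0 := by
        by_contra hc
        exact hx (Finset.mem_union_right _
          (Finset.mem_image_of_mem f2 (Finsupp.mem_support_iff.mpr hc)))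
      simp [hx, this]

end Aux

/-- Over a positive refinement monoid, the pullback of a cospan of coalgebra
morphisms for `B = (P_f ∘ F_W)^A` carries a coalgebra structure making both
projections coalgebra morphisms, i.e. it is an Aczel–Mendler coalgebraic
bisimulation. -/
theorem pullback_is_aczel_mendler_bisimulation
    {W A X1 X2 Y : Type*} [AddCommMonoid W]
    (hpos : IsPositiveMonoid W) (href : IsRefinementMonoid W)
    (h1 : X1 → A → Finset (X1 →₀ W)) (h2 : X2 → A → Finset (X2 →₀ W))
    (g : Y → A → Finset (Y →₀ W)) (f1 : X1 → Y) (f2 : X2 → Y)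
    (hf1 : ∀ x, g (f1 x) = BMap f1 (h1 x))
    (hf2 : ∀ x, g (f2 x) = BMap f2 (h2 x)) :
    ∃ γ : {p : X1 × X2 // f1 p.1 = f2 p.2} →
          A → Finset ({p : X1 × X2 // f1 p.1 = f2 p.2} →₀ W),
      (∀ r : {p : X1 × X2 // f1 p.1 = f2 p.2},
        h1 r.1.1 = BMap (fun q : {p : X1 × X2 // f1 p.1 = f2 p.2} => q.1.1) (γ r)) ∧
      (∀ r : {p : X1 × X2 // f1 p.1 = f2 p.2},
        h2 r.1.2 = BMap (fun q : {p : X1 × X2 // f1 p.1 = f2 p.2} => q.1.2) (γ r)) := by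
  classical
  set R := {p : X1 × X2 // f1 p.1 = f2 p.2}
  have hB : ∀ (r : R) (a : A),
      (h1 r.1.1 a).image (Finsupp.mapDomain f1) =
      (h2 r.1.2 a).image (Finsupp.mapDomain f2) := by
    intro r a
    have h := hf2 r.1.2
    rw [← r.2, hf1 r.1.1] at h
    exact congrFun h a
  have key1 : ∀ (r : R) (a : A), ∀ ρ1 ∈ h1 r.1.1 a,
      ∃ τ : R →₀ W, Finsupp.mapDomain (fun q : R => q.1.1) τ = ρ1 ∧
        Finsupp.mapDomain (fun q : R => q.1.2) τ ∈ h2 r.1.2 a := by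
    intro r a ρ1 hρ1
    have : Finsupp.mapDomain f1 ρ1 ∈ (h2 r.1.2 a).image (Finsupp.mapDomain f2) := by
      rw [← hB r a]; exact Finset.mem_image_of_mem _ hρ1
    obtain ⟨ρ2, hρ2, heq⟩ := Finset.mem_image.mp this
    obtain ⟨τ, hτ1, hτ2⟩ := pullback_lift hpos href f1 f2 ρ1 ρ2 heq.symm
    exact ⟨τ, hτ1, hτ2 ▸ hρ2⟩
  have key2 : ∀ (r : R) (a : A), ∀ ρ2 ∈ h2 r.1.2 a,
      ∃ τ : R →₀ W, Finsupp.mapDomain (fun q : R => q.1.2) τ = ρ2 ∧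
        Finsupp.mapDomain (fun q : R => q.1.1) τ ∈ h1 r.1.1 a := by
    intro r a ρ2 hρ2
    have : Finsupp.mapDomain f2 ρ2 ∈ (h1 r.1.1 a).image (Finsupp.mapDomain f1) := by
      rw [hB r a]; exact Finset.mem_image_of_mem _ hρ2
    obtain ⟨ρ1, hρ1, heq⟩ := Finset.mem_image.mp this
    obtain ⟨τ, hτ1, hτ2⟩ := pullback_lift hpos href f1 f2 ρ1 ρ2 heq
    exact ⟨τ, hτ2, hτ1 ▸ hρ1⟩
  refine ⟨fun r a =>
      ((h1 r.1.1 a).attach.image fun ρ => (key1 r a ρ.1 ρ.2).choose) ∪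
      ((h2 r.1.2 a).attach.image fun ρ => (key2 r a ρ.1 ρ.2).choose), ?_, ?_⟩
  · intro r
    funext a
    unfold BMap
    ext σ
    simp only [Finset.mem_image, Finset.mem_union]
    constructor
    · intro hσ
      exact ⟨(key1 r a σ hσ).choose,
        Or.inl ⟨⟨σ, hσ⟩, Finset.mem_attach _ _, rfl⟩,
        (key1 r a σ hσ).choose_spec.1⟩
    · rintro ⟨τ, hτmem | hτmem, rfl⟩
      · obtain ⟨ρ, _, rfl⟩ := hτmem
        rw [(key1 r a ρ.1 ρ.2).choose_spec.1]
        exact ρ.2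
      · obtain ⟨ρ, _, rfl⟩ := hτmem
        exact (key2 r a ρ.1 ρ.2).choose_spec.2
  · intro r
    funext a
    unfold BMap
    ext σ
    simp only [Finset.mem_image, Finset.mem_union]
    constructor
    · intro hσ
      exact ⟨(key2 r a σ hσ).choose,
        Or.inr ⟨⟨σ, hσ⟩, Finset.mem_attach _ _, rfl⟩,
        (key2 r a σ hσ).choose_spec.1⟩
    · rintro ⟨τ, hτmem | hτmem, rfl⟩
      · obtain ⟨ρ, _, rfl⟩ := hτmem
        exact (key1 r a ρ.1 ρ.2).choose_spec.2
      · obtain ⟨ρ, _, rfl⟩ := hτmem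
        rw [(key2 r a ρ.1 ρ.2).choose_spec.1]
        exact ρ.2
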